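/- arXiv:2601.10357 — 2 statements merged into one kernel-verified Lean document; each statement's English description precedes it below -/
import Mathlib

section
/- Let p : Ω → (δ, 1−δ)^M and q : Ω → (δ, 1−δ)^M be measurable functions with values in the probability simplex (each having coordinates summing to 1), where 0 < δ < 1/2. Then |E[Σ_{m=1}^M p_m log(q_m / p_m)]| ≤ ((1−δ)/(2δ²)) · E[Σ_{m=1}^M (q_m − p_m)²]. -/
open MeasureTheory

/-- For `t ≥ 1`, `t - 1 - log t ≤ (t-1)²/2`. -/
lemma lemA {t : ℝ} (ht : 1 ≤ t) : t - 1 - Real.log t ≤ (t - 1) ^ 2 / 2 := by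
  have h : MonotoneOn (fun t : ℝ => Real.log t + (t - 1) ^ 2 / 2 - (t - 1)) (Set.Ici 1) := by
    apply monotoneOn_of_deriv_nonneg (convex_Ici 1)
    · apply ContinuousOn.sub (ContinuousOn.add _ (by fun_prop)) (by fun_prop)
      exact Real.continuousOn_log.mono (by intro x hx; simp at hx ⊢; linarith)
    · intro x hx
      simp only [interior_Ici, Set.mem_Ioi] at hx
      have hx0 : x ≠ 0 := by positivity
      apply DifferentiableAt.differentiableWithinAt
      exact ((Real.differentiableAt_log hx0).add (by fun_prop)).sub (by fun_prop)
    · intro x hx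
      simp only [interior_Ici, Set.mem_Ioi] at hx
      have hx0 : (0:ℝ) < x := by linarith
      have hd : HasDerivAt (fun t : ℝ => Real.log t + (t - 1) ^ 2 / 2 - (t - 1))
          (x⁻¹ + (x - 1) - 1) x := by
        have h1 : HasDerivAt Real.log x⁻¹ x := Real.hasDerivAt_log (ne_of_gt hx0)
        have h2 : HasDerivAt (fun t : ℝ => (t - 1) ^ 2 / 2) (x - 1) x := by
          have : HasDerivAt (fun t : ℝ => (t - 1) ^ 2) (2 * (x - 1)) x := by
            simpa [Pi.pow_def] using (((hasDerivAt_id x).sub_const 1).pow 2)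
          simpa [mul_comm] using this.div_const 2
        simpa [Pi.add_def, Pi.sub_def] using (h1.add h2).sub ((hasDerivAt_id x).sub_const 1)
      rw [hd.deriv]
      have : x⁻¹ + (x - 1) - 1 = (x - 1)^2 / x := by field_simp; ring
      rw [this]; positivity
  have := h (Set.self_mem_Ici) (Set.mem_Ici.mpr ht) ht
  simp at this
  nlinarith [this]

/-- For `0 < t ≤ 1`, `t - 1 - log t ≤ (t-1)²/(2t)`. -/
lemma lemB {t : ℝ} (ht0 : 0 < t) (ht : t ≤ 1) :
    t - 1 - Real.log t ≤ (t - 1) ^ 2 / (2 * t) := by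
  have h : AntitoneOn (fun t : ℝ => Real.log t + (t - 1) ^ 2 / (2 * t) - (t - 1))
      (Set.Ioc 0 1) := by
    apply antitoneOn_of_deriv_nonpos (convex_Ioc 0 1)
    · apply ContinuousOn.sub (ContinuousOn.add _ _) (by fun_prop)
      · exact Real.continuousOn_log.mono (by intro x hx; simp at hx ⊢; exact ne_of_gt hx.1)
      · apply ContinuousOn.div (by fun_prop) (by fun_prop)
        intro x hx; simp at hx ⊢; exact ne_of_gt hx.1
    · intro x hx
      rw [interior_Ioc] at hx
      have hx0 : (0:ℝ) < x := hx.1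
      apply DifferentiableAt.differentiableWithinAt
      apply DifferentiableAt.sub _ (by fun_prop)
      apply DifferentiableAt.add (Real.differentiableAt_log (ne_of_gt hx0))
      exact DifferentiableAt.div (by fun_prop) (by fun_prop) (by positivity)
    · intro x hx
      rw [interior_Ioc] at hx
      have hx0 : (0:ℝ) < x := hx.1
      have hd : HasDerivAt (fun t : ℝ => Real.log t + (t - 1) ^ 2 / (2 * t) - (t - 1))
          (x⁻¹ + (2 * (x - 1) * (2 * x) - (x - 1) ^ 2 * 2) / (2 * x) ^ 2 - 1) x := by
        have h1 : HasDerivAt Real.log x⁻¹ x := Real.hasDerivAt_log (ne_of_gt hx0)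
        have h2 : HasDerivAt (fun t : ℝ => (t - 1) ^ 2 / (2 * t))
            ((2 * (x - 1) * (2 * x) - (x - 1) ^ 2 * 2) / (2 * x) ^ 2) x := by
          have hn : HasDerivAt (fun t : ℝ => (t - 1) ^ 2) (2 * (x - 1)) x := by
            simpa [Pi.pow_def] using (((hasDerivAt_id x).sub_const 1).pow 2)
          have hdn : HasDerivAt (fun t : ℝ => 2 * t) 2 x := by
            simpa using (hasDerivAt_id x).const_mul 2
          simpa [Pi.div_def] using hn.div hdn (by positivity)
        simpa [Pi.add_def, Pi.sub_def] using (h1.add h2).sub ((hasDerivAt_id x).sub_const 1)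
      rw [hd.deriv]
      have : x⁻¹ + (2 * (x - 1) * (2 * x) - (x - 1) ^ 2 * 2) / (2 * x) ^ 2 - 1
          = -((x - 1) ^ 2 / (2 * x ^ 2)) := by field_simp; ring
      rw [this]
      have : (0:ℝ) ≤ (x - 1) ^ 2 / (2 * x ^ 2) := by positivity
      linarith
  have := h (Set.mem_Ioc.mpr ⟨ht0, ht⟩) (Set.mem_Ioc.mpr ⟨one_pos, le_refl 1⟩) ht
  simp at this
  nlinarith [this]

/-- upper bound: `a log(b/a) ≤ b - a` for positive `a, b`. -/
lemma keyUp {a b : ℝ} (ha : 0 < a) (hb : 0 < b) : a * Real.log (b / a) ≤ b - a := by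
  have := Real.log_le_sub_one_of_pos (div_pos hb ha)
  have h2 : a * Real.log (b / a) ≤ a * (b / a - 1) := by nlinarith
  calc a * Real.log (b / a) ≤ a * (b / a - 1) := h2
    _ = b - a := by rw [mul_sub, mul_one, mul_div_cancel₀ _ (ne_of_gt ha)]

/-- lower bound: `b - a - a log(b/a) ≤ (b-a)²/(2δ)`. -/
lemma keyLow {δ a b : ℝ} (hδ : 0 < δ) (ha : δ ≤ a) (hb : δ ≤ b) :
    b - a - a * Real.log (b / a) ≤ (b - a) ^ 2 / (2 * δ) := by
  have ha0 : 0 < a := lt_of_lt_of_le hδ ha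
  have hb0 : 0 < b := lt_of_lt_of_le hδ hb
  set t := b / a with htdef
  have ht0 : 0 < t := div_pos hb0 ha0
  have hbt : b = a * t := by rw [htdef, mul_div_assoc', mul_comm, mul_div_assoc, div_self (ne_of_gt ha0), mul_one]
  rcases le_or_gt a b with hab | hab
  · have ht1 : 1 ≤ t := (one_le_div ha0).mpr hab
    have := lemA ht1
    have h2 : a * (t - 1 - Real.log t) ≤ a * ((t - 1) ^ 2 / 2) := by nlinarith
    have h3 : a * ((t - 1) ^ 2 / 2) = (b - a) ^ 2 / (2 * a) := by
      rw [hbt]; field_simp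
    have h4 : (b - a) ^ 2 / (2 * a) ≤ (b - a) ^ 2 / (2 * δ) := by
      apply div_le_div_of_nonneg_left (by positivity) (by positivity) (by linarith)
    nlinarith
  · have ht1 : t ≤ 1 := by rw [div_le_one ha0]; linarith
    have := lemB ht0 ht1
    have h2 : a * (t - 1 - Real.log t) ≤ a * ((t - 1) ^ 2 / (2 * t)) := by nlinarith
    have h3 : a * ((t - 1) ^ 2 / (2 * t)) = (b - a) ^ 2 / (2 * b) := by
      rw [hbt]; field_simp
    have h4 : (b - a) ^ 2 / (2 * b) ≤ (b - a) ^ 2 / (2 * δ) := by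
      apply div_le_div_of_nonneg_left (by positivity) (by positivity) (by linarith)
    nlinarith

/-- Curvature bound for cross-entropy.  For simplex-valued
functions `p, q` with coordinates in `(δ, 1-δ)`,
`|E[Σ_m p_m log(q_m / p_m)]| ≤ ((1-δ)/(2δ²)) E[Σ_m (q_m - p_m)²]`. -/
theorem stmt3 {Ω : Type*} [MeasureSpace Ω]
    [IsProbabilityMeasure (volume : Measure Ω)]
    {M : ℕ} {δ : ℝ} (hδ0 : 0 < δ) (hδ1 : δ < 1 / 2)
    (p q : Ω → Fin M → ℝ)
    (hpmeas : Measurable p) (hqmeas : Measurable q)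
    (hpmem : ∀ ω m, p ω m ∈ Set.Ioo δ (1 - δ))
    (hqmem : ∀ ω m, q ω m ∈ Set.Ioo δ (1 - δ))
    (hpsum : ∀ ω, ∑ m, p ω m = 1)
    (hqsum : ∀ ω, ∑ m, q ω m = 1) :
    |∫ ω, ∑ m, p ω m * Real.log (q ω m / p ω m)|
      ≤ (1 - δ) / (2 * δ ^ 2) * ∫ ω, ∑ m, (q ω m - p ω m) ^ 2 := by
  set C : ℝ := (1 - δ) / (2 * δ ^ 2) with hC
  -- pointwise bound
  have hpt : ∀ ω, |∑ m, p ω m * Real.log (q ω m / p ω m)|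
      ≤ C * ∑ m, (q ω m - p ω m) ^ 2 := by
    intro ω
    have hsum0 : ∑ m, (q ω m - p ω m) = 0 := by
      rw [Finset.sum_sub_distrib, hpsum, hqsum]; ring
    have hup : ∑ m, p ω m * Real.log (q ω m / p ω m) ≤ 0 := by
      have : ∑ m, p ω m * Real.log (q ω m / p ω m) ≤ ∑ m, (q ω m - p ω m) :=
        Finset.sum_le_sum fun m _ =>
          keyUp (lt_trans hδ0 (hpmem ω m).1) (lt_trans hδ0 (hqmem ω m).1)
      linarith [this, hsum0]
    have hlow : -(∑ m, p ω m * Real.log (q ω m / p ω m))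
        ≤ ∑ m, (q ω m - p ω m) ^ 2 / (2 * δ) := by
      have : ∑ m, (q ω m - p ω m - p ω m * Real.log (q ω m / p ω m))
          ≤ ∑ m, (q ω m - p ω m) ^ 2 / (2 * δ) :=
        Finset.sum_le_sum fun m _ =>
          keyLow hδ0 (le_of_lt (hpmem ω m).1) (le_of_lt (hqmem ω m).1)
      rw [Finset.sum_sub_distrib, hsum0] at this
      linarith
    have hsq : (0:ℝ) ≤ ∑ m, (q ω m - p ω m) ^ 2 :=
      Finset.sum_nonneg fun m _ => sq_nonneg _
    have hconst : 1 / (2 * δ) ≤ C := by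
      rw [hC, div_le_div_iff₀ (by positivity) (by positivity)]
      nlinarith
    rw [abs_of_nonpos hup]
    calc -(∑ m, p ω m * Real.log (q ω m / p ω m))
        ≤ ∑ m, (q ω m - p ω m) ^ 2 / (2 * δ) := hlow
      _ = (1 / (2 * δ)) * ∑ m, (q ω m - p ω m) ^ 2 := by
          rw [Finset.mul_sum]; congr 1; funext m; ring
      _ ≤ C * ∑ m, (q ω m - p ω m) ^ 2 := by
          apply mul_le_mul_of_nonneg_right hconst hsq
  -- measurability and integrability
  have hgmeas : Measurable (fun ω => ∑ m, (q ω m - p ω m) ^ 2) :=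
    Finset.measurable_sum _ fun m _ =>
      (((measurable_pi_apply m).comp hqmeas).sub
        ((measurable_pi_apply m).comp hpmeas)).pow_const 2
  have hgbd : ∀ ω, ∑ m, (q ω m - p ω m) ^ 2 ≤ (M : ℝ) := by
    intro ω
    calc ∑ m, (q ω m - p ω m) ^ 2 ≤ ∑ _m : Fin M, (1:ℝ) :=
          Finset.sum_le_sum fun m _ => by
            have h1 := hpmem ω m; have h2 := hqmem ω m
            simp only [Set.mem_Ioo] at h1 h2
            nlinarith
      _ = (M : ℝ) := by simp
  have hgnn : ∀ ω, 0 ≤ ∑ m, (q ω m - p ω m) ^ 2 :=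
    fun ω => Finset.sum_nonneg fun m _ => sq_nonneg _
  have hCnn : 0 ≤ C := by rw [hC]; apply div_nonneg (by linarith) (by positivity)
  have hCgint : Integrable (fun ω => C * ∑ m, (q ω m - p ω m) ^ 2) := by
    apply Integrable.mono' (integrable_const (C * M))
      ((hgmeas.const_mul C).aestronglyMeasurable)
    filter_upwards with ω
    rw [Real.norm_eq_abs, abs_of_nonneg (mul_nonneg hCnn (hgnn ω))]
    exact mul_le_mul_of_nonneg_left (hgbd ω) hCnn
  calc |∫ ω, ∑ m, p ω m * Real.log (q ω m / p ω m)|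
      ≤ ∫ ω, |∑ m, p ω m * Real.log (q ω m / p ω m)| := (by simpa using norm_integral_le_integral_norm (μ := (volume : Measure Ω)) (fun ω => ∑ m, p ω m * Real.log (q ω m / p ω m)))
    _ ≤ ∫ ω, C * ∑ m, (q ω m - p ω m) ^ 2 :=
        integral_mono_of_nonneg (Filter.Eventually.of_forall fun ω => abs_nonneg _)
          hCgint (Filter.Eventually.of_forall hpt)
    _ = C * ∫ ω, ∑ m, (q ω m - p ω m) ^ 2 := integral_const_mul C _
end

section
/- Let B ∈ ℝ^{p×d*} and Bd ∈ ℝ^{p×d} (d ≥ d*) both have orthonormal columns, and suppose span(Bd') ⊆ span(Bd) for the first d* columns Bd' of Bd. Then for any x ∈ ℝ^p, with O = Bᵀ Bd we have ‖O Bdᵀ x − Bᵀ x‖₂ ≤ ‖P_B − P_{Bd'}‖₂ · ‖x‖₂, where P_A = A Aᵀ denotes the orthogonal projection onto the column space of A. -/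
open Matrix
open scoped Matrix.Norms.L2Operator

/-- With `O = Bᵀ Bd`, for all `x`,
`‖O Bdᵀ x − Bᵀ x‖₂ ≤ ‖P_B − P_{Bd'}‖₂ ‖x‖₂`, where `Bd'` is the matrix of the
first `d*` columns of `Bd` and `P_A = A Aᵀ`.  Vector norms are Euclidean and
the matrix norm is the `ℓ²` operator (spectral) norm. -/
theorem stmt7 {p dstar d : ℕ} (hd : dstar ≤ d)
    (B : Matrix (Fin p) (Fin dstar) ℝ) (Bd : Matrix (Fin p) (Fin d) ℝ)
    (hB : Bᵀ * B = 1) (hBd : Bdᵀ * Bd = 1)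
    (Bd' : Matrix (Fin p) (Fin dstar) ℝ)
    (hBd' : Bd' = Bd.submatrix id (Fin.castLE hd))
    (x : EuclideanSpace ℝ (Fin p)) :
    ‖(WithLp.equiv 2 (Fin dstar → ℝ)).symm
        ((Bᵀ * Bd).mulVec (Bdᵀ.mulVec (WithLp.equiv 2 (Fin p → ℝ) x))
          - Bᵀ.mulVec (WithLp.equiv 2 (Fin p → ℝ) x))‖
      ≤ ‖B * Bᵀ - Bd' * Bd'ᵀ‖ * ‖x‖ := by
  classical
  set x' : Fin p → ℝ := WithLp.equiv 2 (Fin p → ℝ) x with hx'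
  -- norm via dot product
  have dotnorm : ∀ (n : ℕ) (v : Fin n → ℝ),
      ‖(WithLp.equiv 2 (Fin n → ℝ)).symm v‖ = Real.sqrt (v ⬝ᵥ v) := by
    intro n v
    rw [EuclideanSpace.norm_eq]
    congr 1
    simp [dotProduct, Real.norm_eq_abs, sq_abs, sq]
  -- key matrix identities
  have h1 : Bdᵀ * Bd' = (1 : Matrix (Fin d) (Fin d) ℝ).submatrix id (Fin.castLE hd) := by
    ext j k
    have := congrFun (congrFun hBd j) (Fin.castLE hd k)
    simp [Matrix.mul_apply, hBd'] at this ⊢; exact this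
  have h2 : Bd * ((1 : Matrix (Fin d) (Fin d) ℝ).submatrix id (Fin.castLE hd)) = Bd' := by
    ext i k
    simp [Matrix.mul_apply, Matrix.one_apply, hBd']
  have key : (Bd * Bdᵀ) * Bd' = Bd' := by rw [Matrix.mul_assoc, h1, h2]
  have keyT : Bd'ᵀ * (Bd * Bdᵀ) = Bd'ᵀ := by
    have := congrArg Matrix.transpose key
    simpa [Matrix.transpose_mul, mul_assoc] using this
  have hzero : (Bd' * Bd'ᵀ) * (Bd * Bdᵀ - 1) = 0 := by
    rw [Matrix.mul_sub, Matrix.mul_one, Matrix.mul_assoc, keyT, sub_self]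
  have hmat : (B * Bᵀ) * (Bd * Bdᵀ - 1) = (B * Bᵀ - Bd' * Bd'ᵀ) * (Bd * Bdᵀ - 1) := by
    rw [Matrix.sub_mul, hzero, sub_zero]
  -- B preserves norms
  have hBdot : ∀ w : Fin dstar → ℝ, (B *ᵥ w) ⬝ᵥ (B *ᵥ w) = w ⬝ᵥ w := by
    intro w
    rw [Matrix.dotProduct_mulVec, ← Matrix.mulVec_transpose, Matrix.mulVec_mulVec, hB,
      Matrix.one_mulVec]
  have hBiso : ∀ w : Fin dstar → ℝ,
      ‖(WithLp.equiv 2 (Fin p → ℝ)).symm (B *ᵥ w)‖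
        = ‖(WithLp.equiv 2 (Fin dstar → ℝ)).symm w‖ := by
    intro w
    rw [dotnorm, dotnorm, hBdot]
  -- rewrite LHS vector
  have hv : (Bᵀ * Bd) *ᵥ (Bdᵀ *ᵥ x') - Bᵀ *ᵥ x'
      = Bᵀ *ᵥ ((Bd * Bdᵀ - 1) *ᵥ x') := by
    rw [Matrix.mulVec_mulVec, Matrix.mulVec_mulVec, ← Matrix.sub_mulVec]
    rw [Matrix.mul_sub, Matrix.mul_one, ← Matrix.mul_assoc]
  set u : Fin p → ℝ := (Bd * Bdᵀ - 1) *ᵥ x' with hu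
  -- bound ‖u‖ ≤ ‖x‖
  have hx_norm : ‖x‖ = Real.sqrt (x' ⬝ᵥ x') := by
    have : x = (WithLp.equiv 2 (Fin p → ℝ)).symm x' := by simp [hx']
    rw [this, dotnorm]
  have hBddot : ∀ w : Fin d → ℝ, (Bd *ᵥ w) ⬝ᵥ (Bd *ᵥ w) = w ⬝ᵥ w := by
    intro w
    rw [Matrix.dotProduct_mulVec, ← Matrix.mulVec_transpose, Matrix.mulVec_mulVec, hBd,
      Matrix.one_mulVec]
  have hu_dot : u ⬝ᵥ u ≤ x' ⬝ᵥ x' := by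
    have hw : u = Bd *ᵥ (Bdᵀ *ᵥ x') - x' := by
      rw [hu, Matrix.sub_mulVec, Matrix.one_mulVec, Matrix.mulVec_mulVec]
    set w : Fin d → ℝ := Bdᵀ *ᵥ x' with hwdef
    have hcross : (Bd *ᵥ w) ⬝ᵥ x' = w ⬝ᵥ w := by
      rw [dotProduct_comm, Matrix.dotProduct_mulVec, ← Matrix.mulVec_transpose,
        ← hwdef, dotProduct_comm]
    have hcross2 : x' ⬝ᵥ (Bd *ᵥ w) = w ⬝ᵥ w := by
      rw [dotProduct_comm]; exact hcross
    have hexp : u ⬝ᵥ u = x' ⬝ᵥ x' - w ⬝ᵥ w := by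
      rw [hw, sub_dotProduct, dotProduct_sub, dotProduct_sub,
        hBddot, hcross, hcross2]
      ring
    have hwnn : 0 ≤ w ⬝ᵥ w := Finset.sum_nonneg fun i _ => mul_self_nonneg _
    linarith [hexp]
  have hu_norm : ‖(WithLp.equiv 2 (Fin p → ℝ)).symm u‖ ≤ ‖x‖ := by
    rw [dotnorm, hx_norm]
    exact Real.sqrt_le_sqrt hu_dot
  -- main chain
  rw [hv, ← hBiso]
  have hrw : B *ᵥ (Bᵀ *ᵥ u) = (B * Bᵀ - Bd' * Bd'ᵀ) *ᵥ u := by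
    rw [Matrix.mulVec_mulVec, hu, Matrix.mulVec_mulVec, Matrix.mulVec_mulVec, hmat]
  rw [hrw]
  calc ‖(WithLp.equiv 2 (Fin p → ℝ)).symm ((B * Bᵀ - Bd' * Bd'ᵀ) *ᵥ u)‖
      ≤ ‖B * Bᵀ - Bd' * Bd'ᵀ‖ * ‖(WithLp.equiv 2 (Fin p → ℝ)).symm u‖ :=
        Matrix.l2_opNorm_mulVec _ ((WithLp.equiv 2 (Fin p → ℝ)).symm u)
    _ ≤ ‖B * Bᵀ - Bd' * Bd'ᵀ‖ * ‖x‖ :=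
        mul_le_mul_of_nonneg_left hu_norm (norm_nonneg _)
end
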